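/- Let n ≥ 4 and let m ≥ 0. The number of pairs (S, T), where S = (A_1 ⊊ ⋯ ⊊ A_α) is a strictly increasing chain of subsets of an (n-2)-element set X and T = (A'_1 ⊊ ⋯ ⊊ A'_β) is a strictly increasing chain of subsets of X with (A'_1, A'_β) ≠ (∅, X), with α + β = k and α, β ≥ 0, equals Σ_{α=0}^{k} B_α·C_{k-α}, where B_α = Surj(n-2,α-1) + 2·Surj(n-2,α) + Surj(n-2,α+1) and C_β = 2·Surj(n-2,β) + Surj(n-2,β+1) (Surj(n-2,j) = 0 for j < 0). This is the number f_{k-1} of (k-1)-dimensional faces of the unimodular triangulation of Cut(K_{2,n-2}) induced by the quadratic Gröbner basis, i.e., the number of squarefree standard monomials of degree k. -/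

import Mathlib

/-- The number of surjective functions from an `m`-element set onto a `k`-element set. -/
noncomputable def Surj (m k : ℕ) : ℕ := Nat.card {f : Fin m → Fin k // Function.Surjective f}


variable {m a : ℕ}

def toChain (g : Fin m → Fin (a+1)) : Fin a → Finset (Fin m) :=
  fun i => Finset.univ.filter (fun x => g x ≤ i.castSucc)

def Cov (g : Fin m → Fin (a+1)) : Prop := ∀ i : Fin (a+1), 0 < i.1 → i.1 < a → ∃ x, g x = i

lemma mem_toChain (g : Fin m → Fin (a+1)) (i : Fin a) (x : Fin m) :
    x ∈ toChain g i ↔ g x ≤ i.castSucc := by simp [toChain]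

lemma strictMono_toChain {g : Fin m → Fin (a+1)} (hg : Cov g) : StrictMono (toChain g) := by
  intro i j hij
  constructor
  · intro x hx
    rw [mem_toChain] at *
    exact hx.trans (Fin.castSucc_le_castSucc_iff.mpr hij.le)
  · intro hle
    have hi1 : (i.1+1) < a + 1 := by omega
    obtain ⟨x, hx⟩ := hg ⟨i.1+1, hi1⟩ (show 0 < i.1+1 by omega) (show i.1+1 < a from by have := j.2; have := Fin.lt_def.mp hij; omega)
    have hxj : x ∈ toChain g j := by
      rw [mem_toChain, Fin.le_def, hx]
      show i.1 + 1 ≤ j.1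
      exact hij
    have hxi : x ∉ toChain g i := by
      rw [mem_toChain, Fin.le_def, hx]
      show ¬ (i.1 + 1 ≤ i.1)
      omega
    exact hxi (hle hxj)

open Finset in
/-- the level of x in the chain S -/
noncomputable def levelOf (S : Fin a → Finset (Fin m)) (x : Fin m) : Fin (a+1) :=
  if h : (Finset.univ.filter (fun i : Fin a => x ∈ S i)).Nonempty
  then ((Finset.univ.filter (fun i : Fin a => x ∈ S i)).min' h).castSucc
  else Fin.last a

lemma levelOf_le_iff {S : Fin a → Finset (Fin m)} (hS : Monotone S) (x : Fin m) (i : Fin a) :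
    levelOf S x ≤ i.castSucc ↔ x ∈ S i := by
  unfold levelOf
  split
  · rename_i h
    rw [Fin.castSucc_le_castSucc_iff]
    constructor
    · intro hle
      have hmem := Finset.min'_mem _ h
      simp only [Finset.mem_filter] at hmem
      exact hS hle hmem.2
    · intro hx
      exact Finset.min'_le _ i (by simp [hx])
  · rename_i h
    constructor
    · intro hle
      exact absurd hle (not_le.mpr (Fin.castSucc_lt_last i))
    · intro hx
      exact absurd ⟨i, by simp [hx]⟩ h

lemma toChain_levelOf {S : Fin a → Finset (Fin m)} (hS : StrictMono S) :
    toChain (levelOf S) = S := by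
  funext i
  ext x
  rw [mem_toChain, levelOf_le_iff hS.monotone]

lemma cov_levelOf {S : Fin a → Finset (Fin m)} (hS : StrictMono S) : Cov (levelOf S) := by
  intro i h0 ha
  set j : Fin a := ⟨i.1, ha⟩ with hj
  have hj0 : (0:ℕ) < j.1 := h0
  set j' : Fin a := ⟨j.1 - 1, by omega⟩ with hj'
  have hlt : j' < j := by rw [Fin.lt_def]; show j.1 - 1 < j.1; omega
  obtain ⟨hsub, hne⟩ := hS hlt
  obtain ⟨x, hxj, hxj'⟩ : ∃ x, x ∈ S j ∧ x ∉ S j' := by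
    by_contra hc
    push_neg at hc
    exact hne (fun x hx => hc x hx)
  refine ⟨x, le_antisymm ?_ ?_⟩
  · have : levelOf S x ≤ j.castSucc := (levelOf_le_iff hS.monotone x j).mpr hxj
    exact this.trans_eq (by simp [Fin.ext_iff, hj])
  · by_contra hc
    push_neg at hc
    have : levelOf S x ≤ j'.castSucc := by
      rw [Fin.lt_def] at hc
      rw [Fin.le_def]
      show (levelOf S x).1 ≤ i.1 - 1
      omega
    exact hxj' ((levelOf_le_iff hS.monotone x j').mp this)

lemma toChain_inj {g g' : Fin m → Fin (a+1)} (h : toChain g = toChain g') : g = g' := by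
  funext x
  have key : ∀ i : Fin a, g x ≤ i.castSucc ↔ g' x ≤ i.castSucc := by
    intro i
    rw [← mem_toChain, ← mem_toChain, h]
  rw [Fin.ext_iff]
  by_contra hne
  rcases Nat.lt_or_ge (g x).1 (g' x).1 with hlt | hge
  · have hi : (g x).1 < a := by have := (g' x).2; omega
    have := (key ⟨(g x).1, hi⟩).mp (by rw [Fin.le_def]; simp)
    rw [Fin.le_def] at this; simp at this; omega
  · have hlt : (g' x).1 < (g x).1 := by omega
    have hi : (g' x).1 < a := by have := (g x).2; omega
    have := (key ⟨(g' x).1, hi⟩).mpr (by rw [Fin.le_def]; simp)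
    rw [Fin.le_def] at this; simp at this; omega

noncomputable def levelEquiv (m a : ℕ) :
    {g : Fin m → Fin (a+1) // Cov g} ≃ {S : Fin a → Finset (Fin m) // StrictMono S} where
  toFun g := ⟨toChain g.1, strictMono_toChain g.2⟩
  invFun S := ⟨levelOf S.1, cov_levelOf S.2⟩
  left_inv g := Subtype.ext (toChain_inj (by rw [toChain_levelOf (strictMono_toChain g.2)]))
  right_inv S := Subtype.ext (toChain_levelOf S.2)



lemma card_split {α : Type*} [Finite α] (p q : α → Prop) :
    Nat.card {x // p x} = Nat.card {x // p x ∧ q x} + Nat.card {x // p x ∧ ¬q x} := by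
  classical
  rw [← Nat.card_sum]
  refine Nat.card_congr ?_
  exact (Equiv.sumCompl (fun x : {x // p x} => q x.1)).symm.trans
    (Equiv.sumCongr (Equiv.subtypeSubtypeEquivSubtypeInter p q)
      (Equiv.subtypeSubtypeEquivSubtypeInter p (fun x => ¬ q x)))

lemma card_surj_congr {β γ : Type*} (e : β ≃ γ) (m : ℕ) :
    Nat.card {f : Fin m → β // Function.Surjective f}
      = Nat.card {f : Fin m → γ // Function.Surjective f} := by
  refine Nat.card_congr ((Equiv.arrowCongr (Equiv.refl (Fin m)) e).subtypeEquiv fun f => ?_)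
  simp [Equiv.arrowCongr, Function.Surjective, e.surjective.forall, e.injective.eq_iff,
    eq_comm]

lemma card_range_eq {β : Type*} [Fintype β] [DecidableEq β] (K : Finset β) (m : ℕ) :
    Nat.card {g : Fin m → β // ∀ b : β, (∃ x, g x = b) ↔ b ∈ K} = Surj m K.card := by
  have e1 : {g : Fin m → β // ∀ b : β, (∃ x, g x = b) ↔ b ∈ K}
      ≃ {h : Fin m → {b // b ∈ K} // Function.Surjective h} := by
    refine ⟨fun g => ⟨fun x => ⟨g.1 x, (g.2 (g.1 x)).1 ⟨x, rfl⟩⟩, fun b => ?_⟩,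
      fun h => ⟨fun x => (h.1 x : β), fun b => ⟨fun hb => ?_, fun hb => ?_⟩⟩, fun g => ?_, fun h => ?_⟩
    · obtain ⟨x, hx⟩ := (g.2 b.1).2 b.2
      exact ⟨x, Subtype.ext hx⟩
    · obtain ⟨x, hx⟩ := hb
      exact hx ▸ (h.1 x).2
    · obtain ⟨x, hx⟩ := h.2 ⟨b, hb⟩
      exact ⟨x, congrArg Subtype.val hx⟩
    · rfl
    · rfl
  rw [Nat.card_congr e1, Surj]
  exact card_surj_congr (Fintype.equivFinOfCardEq (Fintype.card_coe K)) m

lemma surj_zero {m : ℕ} (hm : 1 ≤ m) : Surj m 0 = 0 := by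
  haveI : IsEmpty {f : Fin m → Fin 0 // Function.Surjective f} :=
    ⟨fun f => (f.1 ⟨0, hm⟩).elim0⟩
  simp [Surj]

lemma surj_one {m : ℕ} (hm : 1 ≤ m) : Surj m 1 = 1 := by
  haveI : Unique {f : Fin m → Fin 1 // Function.Surjective f} :=
    { default := ⟨fun _ => 0, fun b => ⟨⟨0, hm⟩, Subsingleton.elim _ _⟩⟩
      uniq := fun f => Subtype.ext (funext fun x => Subsingleton.elim _ _) }
  simp [Surj]

section cells
variable {m a : ℕ}

lemma zero_ne_last (ha : 1 ≤ a) : (0 : Fin (a+1)) ≠ Fin.last a := by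
  rw [Fin.ne_iff_vne]
  simp [Fin.val_last]
  omega

lemma val_pos_of_ne_zero {b : Fin (a+1)} (hb : b ≠ 0) : 0 < b.1 := by
  rcases Nat.eq_zero_or_pos b.1 with h | h
  · exact absurd (Fin.ext (by simp [h])) hb
  · exact h

lemma val_lt_of_ne_last {b : Fin (a+1)} (hb : b ≠ Fin.last a) : b.1 < a := by
  have := b.2
  rcases Nat.lt_or_ge b.1 a with h | h
  · exact h
  · exact absurd (Fin.ext (by simp [Fin.val_last]; omega)) hb

lemma cell_TT (ha : 1 ≤ a) (g : Fin m → Fin (a+1)) :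
    ((Cov g ∧ (∃ x, g x = 0)) ∧ (∃ x, g x = Fin.last a)) ↔
      ∀ b : Fin (a+1), (∃ x, g x = b) ↔ b ∈ (Finset.univ : Finset (Fin (a+1))) := by
  constructor
  · rintro ⟨⟨hc, h0⟩, h1⟩ b
    simp only [Finset.mem_univ, iff_true]
    by_cases hb0 : b = 0
    · exact hb0 ▸ h0
    by_cases hb1 : b = Fin.last a
    · exact hb1 ▸ h1
    exact hc b (val_pos_of_ne_zero hb0) (val_lt_of_ne_last hb1)
  · intro h
    exact ⟨⟨fun i _ _ => (h i).mpr (Finset.mem_univ i), (h 0).mpr (Finset.mem_univ _)⟩,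
      (h _).mpr (Finset.mem_univ _)⟩

lemma cell_TF (ha : 1 ≤ a) (g : Fin m → Fin (a+1)) :
    ((Cov g ∧ (∃ x, g x = 0)) ∧ ¬(∃ x, g x = Fin.last a)) ↔
      ∀ b : Fin (a+1), (∃ x, g x = b) ↔ b ∈ Finset.univ.erase (Fin.last a) := by
  constructor
  · rintro ⟨⟨hc, h0⟩, h1⟩ b
    rw [Finset.mem_erase]
    constructor
    · rintro ⟨x, hx⟩
      exact ⟨fun hb => h1 ⟨x, hb ▸ hx⟩, Finset.mem_univ _⟩
    · rintro ⟨hb1, -⟩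
      by_cases hb0 : b = 0
      · exact hb0 ▸ h0
      exact hc b (val_pos_of_ne_zero hb0) (val_lt_of_ne_last hb1)
  · intro h
    refine ⟨⟨fun i hi0 hia => (h i).mpr (Finset.mem_erase.mpr ⟨?_, Finset.mem_univ _⟩),
      (h 0).mpr (Finset.mem_erase.mpr ⟨zero_ne_last ha, Finset.mem_univ _⟩)⟩, fun hx => ?_⟩
    · rw [Fin.ne_iff_vne]; simp [Fin.val_last]; omega
    · have := (h _).mp hx
      rw [Finset.mem_erase] at this
      exact this.1 rfl

lemma cell_FT (ha : 1 ≤ a) (g : Fin m → Fin (a+1)) :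
    ((Cov g ∧ ¬(∃ x, g x = 0)) ∧ (∃ x, g x = Fin.last a)) ↔
      ∀ b : Fin (a+1), (∃ x, g x = b) ↔ b ∈ Finset.univ.erase (0 : Fin (a+1)) := by
  constructor
  · rintro ⟨⟨hc, h0⟩, h1⟩ b
    rw [Finset.mem_erase]
    constructor
    · rintro ⟨x, hx⟩
      exact ⟨fun hb => h0 ⟨x, hb ▸ hx⟩, Finset.mem_univ _⟩
    · rintro ⟨hb0, -⟩
      by_cases hb1 : b = Fin.last a
      · exact hb1 ▸ h1
      exact hc b (val_pos_of_ne_zero hb0) (val_lt_of_ne_last hb1)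
  · intro h
    refine ⟨⟨fun i hi0 hia => (h i).mpr (Finset.mem_erase.mpr ⟨?_, Finset.mem_univ _⟩),
      fun hx => ?_⟩, (h _).mpr (Finset.mem_erase.mpr ⟨(zero_ne_last ha).symm, Finset.mem_univ _⟩)⟩
    · rw [Fin.ne_iff_vne, Fin.val_zero]; omega
    · have := (h _).mp hx
      rw [Finset.mem_erase] at this
      exact this.1 rfl

lemma cell_FF (ha : 1 ≤ a) (g : Fin m → Fin (a+1)) :
    ((Cov g ∧ ¬(∃ x, g x = 0)) ∧ ¬(∃ x, g x = Fin.last a)) ↔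
      ∀ b : Fin (a+1), (∃ x, g x = b) ↔
        b ∈ (Finset.univ.erase (0 : Fin (a+1))).erase (Fin.last a) := by
  constructor
  · rintro ⟨⟨hc, h0⟩, h1⟩ b
    rw [Finset.mem_erase, Finset.mem_erase]
    constructor
    · rintro ⟨x, hx⟩
      exact ⟨fun hb => h1 ⟨x, hb ▸ hx⟩, fun hb => h0 ⟨x, hb ▸ hx⟩, Finset.mem_univ _⟩
    · rintro ⟨hb1, hb0, -⟩
      exact hc b (val_pos_of_ne_zero hb0) (val_lt_of_ne_last hb1)
  · intro h
    refine ⟨⟨fun i hi0 hia => (h i).mpr ?_, fun hx => ?_⟩, fun hx => ?_⟩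
    · rw [Finset.mem_erase, Finset.mem_erase]
      refine ⟨?_, ?_, Finset.mem_univ _⟩
      · rw [Fin.ne_iff_vne]; simp [Fin.val_last]; omega
      · rw [Fin.ne_iff_vne, Fin.val_zero]; omega
    · have := (h _).mp hx
      rw [Finset.mem_erase, Finset.mem_erase] at this
      exact this.2.1 rfl
    · have := (h _).mp hx
      rw [Finset.mem_erase, Finset.mem_erase] at this
      exact this.1 rfl

lemma card_cov (m a : ℕ) (ha : 1 ≤ a) :
    Nat.card {g : Fin m → Fin (a+1) // Cov g}
      = Surj m (a-1) + 2 * Surj m a + Surj m (a+1) := by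
  classical
  rw [card_split (Cov (m := m) (a := a)) (fun g => ∃ x, g x = 0)]
  rw [card_split (fun g : Fin m → Fin (a+1) => Cov g ∧ (∃ x, g x = 0))
      (fun g => ∃ x, g x = Fin.last a)]
  rw [card_split (fun g : Fin m → Fin (a+1) => Cov g ∧ ¬(∃ x, g x = 0))
      (fun g => ∃ x, g x = Fin.last a)]
  rw [Nat.card_congr (Equiv.subtypeEquivRight (fun g => cell_TT ha g)),
      Nat.card_congr (Equiv.subtypeEquivRight (fun g => cell_TF ha g)),
      Nat.card_congr (Equiv.subtypeEquivRight (fun g => cell_FT ha g)),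
      Nat.card_congr (Equiv.subtypeEquivRight (fun g => cell_FF ha g)),
      card_range_eq, card_range_eq, card_range_eq, card_range_eq]
  have h1 : (Finset.univ : Finset (Fin (a+1))).card = a + 1 := by simp
  have h2 : (Finset.univ.erase (Fin.last a)).card = a := by
    rw [Finset.card_erase_of_mem (Finset.mem_univ _), h1]
    omega
  have h3 : (Finset.univ.erase (0 : Fin (a+1))).card = a := by
    rw [Finset.card_erase_of_mem (Finset.mem_univ _), h1]
    omega
  have h4 : ((Finset.univ.erase (0 : Fin (a+1))).erase (Fin.last a)).card = a - 1 := by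
    rw [Finset.card_erase_of_mem (Finset.mem_erase.mpr ⟨(zero_ne_last ha).symm,
      Finset.mem_univ _⟩), h3]
  rw [h1, h2, h3, h4]
  ring

lemma card_covC (m a : ℕ) (ha : 1 ≤ a) :
    Nat.card {g : Fin m → Fin (a+1) //
        Cov g ∧ ((∃ x, g x = 0) ∨ (∃ x, g x = Fin.last a))}
      = 2 * Surj m a + Surj m (a+1) := by
  classical
  have key : ∀ g : Fin m → Fin (a+1),
      (Cov g ∧ ((∃ x, g x = 0) ∨ (∃ x, g x = Fin.last a))) ↔
      ((Cov g ∧ (∃ x, g x = 0)) ∨ ((Cov g ∧ ¬(∃ x, g x = 0)) ∧ (∃ x, g x = Fin.last a))) := by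
    intro g; tauto
  rw [Nat.card_congr (Equiv.subtypeEquivRight key)]
  rw [card_split (fun g : Fin m → Fin (a+1) =>
        ((Cov g ∧ (∃ x, g x = 0)) ∨ ((Cov g ∧ ¬(∃ x, g x = 0)) ∧ (∃ x, g x = Fin.last a))))
      (fun g => ∃ x, g x = 0)]
  rw [Nat.card_congr (Equiv.subtypeEquivRight
      (p := fun g : Fin m → Fin (a+1) =>
        ((Cov g ∧ (∃ x, g x = 0)) ∨ ((Cov g ∧ ¬(∃ x, g x = 0)) ∧ (∃ x, g x = Fin.last a))) ∧
          (∃ x, g x = 0))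
      (q := fun g : Fin m → Fin (a+1) =>
        Cov g ∧ (∃ x, g x = 0)) (fun g => by
    constructor
    · rintro ⟨(⟨hc, h0⟩ | ⟨⟨hc, h0'⟩, h1⟩), hp0⟩
      · exact ⟨hc, h0⟩
      · exact absurd hp0 h0'
    · rintro ⟨hc, h0⟩
      exact ⟨Or.inl ⟨hc, h0⟩, h0⟩))]
  rw [Nat.card_congr (Equiv.subtypeEquivRight
      (p := fun g : Fin m → Fin (a+1) =>
        ((Cov g ∧ (∃ x, g x = 0)) ∨ ((Cov g ∧ ¬(∃ x, g x = 0)) ∧ (∃ x, g x = Fin.last a))) ∧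
          ¬(∃ x, g x = 0))
      (q := fun g : Fin m → Fin (a+1) =>
        (Cov g ∧ ¬(∃ x, g x = 0)) ∧ (∃ x, g x = Fin.last a)) (fun g => by
    constructor
    · rintro ⟨(⟨hc, h0⟩ | hB), hp0⟩
      · exact absurd h0 hp0
      · exact hB
    · rintro ⟨⟨hc, h0⟩, h1⟩
      exact ⟨Or.inr ⟨⟨hc, h0⟩, h1⟩, h0⟩))]
  rw [card_split (fun g : Fin m → Fin (a+1) => Cov g ∧ (∃ x, g x = 0))
      (fun g => ∃ x, g x = Fin.last a)]
  rw [Nat.card_congr (Equiv.subtypeEquivRight (fun g => cell_TT ha g)),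
      Nat.card_congr (Equiv.subtypeEquivRight (fun g => cell_TF ha g)),
      Nat.card_congr (Equiv.subtypeEquivRight (fun g => cell_FT ha g)),
      card_range_eq, card_range_eq, card_range_eq]
  have h1 : (Finset.univ : Finset (Fin (a+1))).card = a + 1 := by simp
  have h2 : (Finset.univ.erase (Fin.last a)).card = a := by
    rw [Finset.card_erase_of_mem (Finset.mem_univ _), h1]
    omega
  have h3 : (Finset.univ.erase (0 : Fin (a+1))).card = a := by
    rw [Finset.card_erase_of_mem (Finset.mem_univ _), h1]
    omega
  rw [h1, h2, h3]
  ring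
end cells

lemma card_chains (m a : ℕ) (hm : 1 ≤ m) :
    Nat.card {S : Fin a → Finset (Fin m) // StrictMono S}
      = (if a = 0 then 0 else Surj m (a-1)) + 2 * Surj m a + Surj m (a+1) := by
  rcases Nat.eq_zero_or_pos a with rfl | ha
  · haveI : Unique {S : Fin 0 → Finset (Fin m) // StrictMono S} :=
      { default := ⟨fun i => i.elim0, fun i _ _ => i.elim0⟩
        uniq := fun S => Subtype.ext (funext fun i => i.elim0) }
    simp [Nat.card_unique, surj_zero hm, surj_one hm]
  · rw [← Nat.card_congr (levelEquiv m a), card_cov m a ha, if_neg (by omega)]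

lemma toChain_zero_empty {m b : ℕ} (hb : 0 < b) (g : Fin m → Fin (b+1)) :
    toChain g ⟨0, hb⟩ = ∅ ↔ ¬∃ x, g x = 0 := by
  simp only [Finset.eq_empty_iff_forall_notMem, mem_toChain, not_exists]
  refine forall_congr' fun x => not_congr ?_
  rw [Fin.le_def, Fin.ext_iff]
  simp only [Fin.coe_castSucc, Fin.val_zero]
  omega

lemma toChain_last_univ {m b : ℕ} (hb : 0 < b) (g : Fin m → Fin (b+1)) :
    toChain g ⟨b - 1, by omega⟩ = Finset.univ ↔ ¬∃ x, g x = Fin.last b := by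
  rw [Finset.eq_univ_iff_forall]
  simp only [mem_toChain, not_exists]
  refine forall_congr' fun x => ?_
  rw [Fin.le_def, Fin.ext_iff, Fin.val_last]
  simp only [Fin.coe_castSucc]
  have := (g x).2
  constructor <;> intro h <;> omega

lemma card_chainsC (m b : ℕ) (hm : 1 ≤ m) :
    Nat.card {T : Fin b → Finset (Fin m) // StrictMono T ∧
        ∀ h : 0 < b, ¬(T ⟨0, h⟩ = ∅ ∧ T ⟨b - 1, by omega⟩ = Finset.univ)}
      = 2 * Surj m b + Surj m (b+1) := by
  rcases Nat.eq_zero_or_pos b with rfl | hb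
  · haveI : Unique {T : Fin 0 → Finset (Fin m) // StrictMono T ∧
        ∀ h : (0:ℕ) < 0, ¬(T ⟨0, h⟩ = ∅ ∧ T ⟨0 - 1, by omega⟩ = Finset.univ)} :=
      { default := ⟨fun i => i.elim0, ⟨fun i _ _ => i.elim0, fun h => absurd h (by omega)⟩⟩
        uniq := fun S => Subtype.ext (funext fun i => i.elim0) }
    rw [Nat.card_unique]; simp [surj_zero hm, surj_one hm]
  · rw [← card_covC m b hb]
    refine Nat.card_congr ⟨fun T => ⟨levelOf T.1, cov_levelOf T.2.1, ?_⟩,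
      fun g => ⟨toChain g.1, strictMono_toChain g.2.1, ?_⟩,
      fun T => Subtype.ext (toChain_levelOf T.2.1),
      fun g => Subtype.ext (toChain_inj (toChain_levelOf (strictMono_toChain g.2.1)))⟩
    · have hQ := T.2.2 hb
      rw [← toChain_levelOf T.2.1] at hQ
      rw [toChain_zero_empty hb, toChain_last_univ hb] at hQ
      tauto
    · intro h
      rw [toChain_zero_empty hb, toChain_last_univ hb]
      rcases g.2.2 with h0 | h1
      · tauto
      · tauto

lemma nat_card_sigma {ι : Type*} [Fintype ι] {f : ι → Type*} [∀ i, Finite (f i)] :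
    Nat.card (Σ i, f i) = ∑ i, Nat.card (f i) := by
  letI : ∀ i, Fintype (f i) := fun i => Fintype.ofFinite _
  simp [Nat.card_eq_fintype_card, Fintype.card_sigma]


/-- For `n ≥ 4` and `k ≥ 0`, the number of pairs `(S, T)` where
`S = (A₁ ⊊ ⋯ ⊊ A_α)` is a strictly increasing chain of subsets of an `(n-2)`-element set `X`
and `T = (A'₁ ⊊ ⋯ ⊊ A'_β)` is a strictly increasing chain of subsets of `X` with
`(A'₁, A'_β) ≠ (∅, X)`, with `α + β = k` and `α, β ≥ 0` (empty chains allowed), equals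
`Σ_{α=0}^{k} B_α·C_{k-α}`, where `B_α = Surj(n-2,α-1) + 2·Surj(n-2,α) + Surj(n-2,α+1)`
(with `Surj(n-2,j) = 0` for `j < 0`) and `C_β = 2·Surj(n-2,β) + Surj(n-2,β+1)`.
This is the number `f_{k-1}` of squarefree standard monomials of degree `k`, i.e. the number
of `(k-1)`-dimensional faces of the unimodular triangulation of `Cut(K_{2,n-2})` induced by
the quadratic Gröbner basis. -/

theorem face_numbers_cut_K2m (n : ℕ) (hn : 4 ≤ n) (k : ℕ) :
    Nat.card (Σ α : Fin (k + 1),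
        {S : Fin (α : ℕ) → Finset (Fin (n - 2)) // StrictMono S} ×
        {T : Fin (k - (α : ℕ)) → Finset (Fin (n - 2)) // StrictMono T ∧
          ∀ h : 0 < k - (α : ℕ),
            ¬(T ⟨0, h⟩ = ∅ ∧ T ⟨k - (α : ℕ) - 1, by omega⟩ = Finset.univ)})
      = ∑ α ∈ Finset.range (k + 1),
          ((if α = 0 then 0 else Surj (n - 2) (α - 1)) + 2 * Surj (n - 2) α +
              Surj (n - 2) (α + 1)) *
            (2 * Surj (n - 2) (k - α) + Surj (n - 2) (k - α + 1)) := by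

  have hm : 1 ≤ n - 2 := by omega
  rw [nat_card_sigma]
  have step : ∀ α : Fin (k + 1),
      Nat.card ({S : Fin (α : ℕ) → Finset (Fin (n - 2)) // StrictMono S} ×
        {T : Fin (k - (α : ℕ)) → Finset (Fin (n - 2)) // StrictMono T ∧
          ∀ h : 0 < k - (α : ℕ),
            ¬(T ⟨0, h⟩ = ∅ ∧ T ⟨k - (α : ℕ) - 1, by omega⟩ = Finset.univ)})
      = ((if (α : ℕ) = 0 then 0 else Surj (n - 2) ((α : ℕ) - 1)) + 2 * Surj (n - 2) (α : ℕ) +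
              Surj (n - 2) ((α : ℕ) + 1)) *
            (2 * Surj (n - 2) (k - (α : ℕ)) + Surj (n - 2) (k - (α : ℕ) + 1)) := by
    intro α
    rw [Nat.card_prod]
    congr 1
    · exact card_chains (n - 2) (α : ℕ) hm
    · exact card_chainsC (n - 2) (k - (α : ℕ)) hm
  rw [Finset.sum_congr rfl (fun α _ => step α)]
  exact Fin.sum_univ_eq_sum_range (fun α => ((if α = 0 then 0 else Surj (n - 2) (α - 1)) +
    2 * Surj (n - 2) α + Surj (n - 2) (α + 1)) *
    (2 * Surj (n - 2) (k - α) + Surj (n - 2) (k - α + 1))) (k + 1)
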